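/- The loss L decomposes as L = l1 + l2 where l1(r, b) = -b2·1{r < b2} - r·1{b2 ≤ r ≤ b1} - b1·1{r > b1} and l2(r, b) = b1·1{r > b1}; l1 is 1-Lipschitz in r and L = -Revenue. -/

import Mathlib

/-- Revenue of a second-price auction with reserve price `r` and bids `(b1, b2)`. -/
noncomputable def Revenue (r b1 b2 : ℝ) : ℝ :=
  (if r < b2 then b2 else 0) + (if b2 ≤ r ∧ r ≤ b1 then r else 0)

/-- The loss `L(r, b) = -Revenue(r, b)`. -/
noncomputable def Lloss (r b1 b2 : ℝ) : ℝ := -Revenue r b1 b2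

/-- `l1(r, b) = -b2·1{r < b2} - r·1{b2 ≤ r ≤ b1} - b1·1{r > b1}`. -/
noncomputable def l1 (r b1 b2 : ℝ) : ℝ :=
  (if r < b2 then -b2 else 0) + (if b2 ≤ r ∧ r ≤ b1 then -r else 0)
    + (if b1 < r then -b1 else 0)

/-- `l2(r, b) = b1·1{r > b1}`. -/
noncomputable def l2 (r b1 b2 : ℝ) : ℝ := if b1 < r then b1 else 0

lemma l1_eq (b1 b2 : ℝ) (hle : b2 ≤ b1) (r : ℝ) :
    l1 r b1 b2 = -(max b2 (min r b1)) := by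
  unfold l1
  rcases lt_or_ge r b2 with h | h
  · rw [if_pos h, if_neg (by intro ⟨h1, _⟩; linarith), if_neg (by linarith)]
    have : max b2 (min r b1) = b2 := by
      rw [max_eq_left]
      exact le_trans (min_le_left _ _) h.le
    rw [this]; ring
  · rcases le_or_gt r b1 with h2 | h2
    · rw [if_neg (by linarith), if_pos ⟨h, h2⟩, if_neg (by linarith)]
      have : max b2 (min r b1) = r := by
        rw [min_eq_left h2, max_eq_right h]
      rw [this]; ring
    · rw [if_neg (by linarith), if_neg (by intro ⟨_, h3⟩; linarith), if_pos h2]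
      have : max b2 (min r b1) = b1 := by
        rw [min_eq_right h2.le, max_eq_right hle]
      rw [this]; ring

theorem loss_decomposition (b1 b2 : ℝ) (h0 : 0 ≤ b2) (hle : b2 ≤ b1) :
    (∀ r : ℝ, Lloss r b1 b2 = l1 r b1 b2 + l2 r b1 b2) ∧
    (∀ r r' : ℝ, |l1 r b1 b2 - l1 r' b1 b2| ≤ |r - r'|) := by
  constructor
  · intro r
    unfold Lloss Revenue l1 l2
    split_ifs with h1 h2 h3 <;> (try push_neg at *) <;> try ring
    all_goals linarith [h2.1, h2.2]
  · intro r r'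
    rw [l1_eq b1 b2 hle r, l1_eq b1 b2 hle r']
    calc |-(max b2 (min r b1)) - -(max b2 (min r' b1))|
        = |max (min r b1) b2 - max (min r' b1) b2| := by
          rw [← abs_neg, max_comm b2, max_comm b2]; ring_nf
      _ ≤ |min r b1 - min r' b1| := abs_max_sub_max_le_abs _ _ _
      _ ≤ max |r - r'| |b1 - b1| := abs_min_sub_min_le_max _ _ _ _
      _ = |r - r'| := by simp
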